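/- Let H₁ = [[f₁,u₁],[g₁,v₁]] and H₂ = [[f₂,u₂],[g₂,v₂]] with all entries in L^∞. The following are equivalent: (1) the product R_{H₁}R_{H₂} is a generalized Cauchy singular integral operator (equals R_K for some K ∈ L^∞_{2×2}); (2) the rank-one operator identity ( V((conj(f₁))₋), (g₁)₋ ) ⊗ ( V((f₂)₋), (conj(u₂))₋ ) = ( V((conj(u₁))₋), (v₁)₋ ) ⊗ ( V((g₂)₋), (conj(v₂))₋ ) holds on L² ⊕ L²; (3) one of the following holds: (3.1) [conj(f₁), g₁ ∈ H^∞ or f₂, conj(u₂) ∈ H^∞] and [conj(u₁), v₁ ∈ H^∞ or g₂, conj(v₂) ∈ H^∞]; (3.2) if (3.1) does not happen, there exists a nonzero constant λ such that conj(f₁) − conj(λ)·conj(u₁), g₁ − λv₁, g₂ − λf₂, and conj(v₂) − conj(λ)·conj(u₂) all lie in H^∞. -/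

import Mathlib

noncomputable section

open MeasureTheory Complex ComplexConjugate InnerProductSpace ContinuousLinearMap

namespace GSIO

instance : Fact (0 < 2 * Real.pi) := ⟨by positivity⟩

/-- The circle, modeled as `ℝ / 2πℤ`. -/
abbrev Circ : Type := AddCircle (2 * Real.pi)

/-- Normalized Haar (arc-length) measure on the circle. -/
abbrev μC : Measure Circ := AddCircle.haarAddCircle

/-- `L²` of the circle. -/
abbrev L2 : Type := Lp ℂ 2 μC

/-- `L^∞` of the circle. -/
abbrev Linf : Type := Lp ℂ ⊤ μC

/-- The Hardy space `H²`: those `L²` functions whose negative Fourier coefficients vanish. -/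
def Hardy : Submodule ℂ L2 where
  carrier := {f : L2 | ∀ n : ℤ, n < 0 → fourierCoeff (f : Circ → ℂ) n = 0}
  zero_mem' := by
    intro n hn
    rw [← fourierBasis_repr]
    simp
  add_mem' := by
    intro a b ha hb n hn
    have ha' := ha n hn
    have hb' := hb n hn
    rw [← fourierBasis_repr] at ha' hb' ⊢
    rw [map_add, lp.coeFn_add, Pi.add_apply, ha', hb', add_zero]
  smul_mem' := by
    intro c a ha n hn
    have ha' := ha n hn
    rw [← fourierBasis_repr] at ha' ⊢
    rw [_root_.map_smul, lp.coeFn_smul, Pi.smul_apply, ha', smul_zero]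

theorem isClosed_Hardy : IsClosed (Hardy : Set L2) := by
  have h : (Hardy : Set L2) =
      ⋂ n : {m : ℤ // m < 0}, (fun f : L2 =>
        (innerSL ℂ (fourierBasis (T := 2 * Real.pi) n.1)) f) ⁻¹' {0} := by
    ext f
    simp only [Set.mem_iInter, Set.mem_preimage, Set.mem_singleton_iff, SetLike.mem_coe]
    constructor
    · intro hf n
      have h1 := hf n.1 n.2
      rw [← fourierBasis_repr, fourierBasis.repr_apply_apply] at h1
      simpa using h1
    · intro hf n hn
      have h1 := hf ⟨n, hn⟩
      rw [← fourierBasis_repr, fourierBasis.repr_apply_apply]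
      simpa using h1
  rw [h]
  exact isClosed_iInter fun n =>
    isClosed_singleton.preimage (innerSL ℂ _).continuous

instance : CompleteSpace Hardy := isClosed_Hardy.completeSpace_coe

/-- The Riesz projection `P₊`, i.e. the orthogonal projection of `L²` onto `H²`. -/
def Pp : L2 →L[ℂ] L2 := Hardy.subtypeL.comp (Hardy.orthogonalProjectionOnto)

/-- `P₋ = I − P₊`. -/
def Pm : L2 →L[ℂ] L2 := ContinuousLinearMap.id ℂ L2 - Pp

/-- The pointwise product of an `L^∞` function with an `L²` function, as an `L²` function. -/
def mulFun (φ : Linf) (x : L2) : L2 :=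
  ((Lp.memLp x).smul (r := 2) (Lp.memLp φ)).toLp ((φ : Circ → ℂ) • (x : Circ → ℂ))

theorem mulFun_add (φ : Linf) (x y : L2) : mulFun φ (x + y) = mulFun φ x + mulFun φ y := by
  rw [mulFun, mulFun, mulFun, ← MemLp.toLp_add]
  apply MemLp.toLp_congr
  filter_upwards [Lp.coeFn_add x y] with t ht
  have ht' : ((x + y : L2) : Circ → ℂ) t = (x : Circ → ℂ) t + (y : Circ → ℂ) t := by
    simpa using ht
  simp only [Pi.mul_apply, Pi.smul_apply, Pi.add_apply, smul_eq_mul, ht']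
  ring

theorem mulFun_smul (c : ℂ) (φ : Linf) (x : L2) : mulFun φ (c • x) = c • mulFun φ x := by
  rw [mulFun, mulFun, ← MemLp.toLp_const_smul]
  apply MemLp.toLp_congr
  filter_upwards [Lp.coeFn_smul c x] with t ht
  have ht' : ((c • x : L2) : Circ → ℂ) t = c * (x : Circ → ℂ) t := by
    simpa using ht
  simp only [Pi.mul_apply, Pi.smul_apply, smul_eq_mul, ht']
  ring

theorem norm_mulFun_le (φ : Linf) (x : L2) : ‖mulFun φ x‖ ≤ ‖φ‖ * ‖x‖ := by
  rw [mulFun, Lp.norm_toLp]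
  have h := eLpNorm_smul_le_eLpNorm_top_mul_eLpNorm (μ := μC) 2
    (Lp.aestronglyMeasurable x) (φ : Circ → ℂ)
  refine le_trans (ENNReal.toReal_mono ?_ h) ?_
  · exact ENNReal.mul_ne_top (Lp.eLpNorm_ne_top φ) (Lp.eLpNorm_ne_top x)
  · rw [ENNReal.toReal_mul, Lp.norm_def, Lp.norm_def]

/-- The multiplication operator `M_φ` on `L²`, for `φ ∈ L^∞`. -/
def mul (φ : Linf) : L2 →L[ℂ] L2 :=
  LinearMap.mkContinuous
    { toFun := mulFun φ
      map_add' := mulFun_add φ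
      map_smul' := fun c x => mulFun_smul c φ x }
    ‖φ‖ (fun x => norm_mulFun_le φ x)

/-- Pointwise product in `L^∞`. -/
def mulInf (φ ψ : Linf) : Linf :=
  ((Lp.memLp ψ).smul (r := ⊤) (Lp.memLp φ)).toLp ((φ : Circ → ℂ) • (ψ : Circ → ℂ))

/-- Complex conjugation on `L^∞`. -/
def conjInf (φ : Linf) : Linf :=
  (show MemLp (fun t => star ((φ : Circ → ℂ) t)) ⊤ μC from
    ⟨continuous_star.comp_aestronglyMeasurable (Lp.aestronglyMeasurable φ), by
      rw [eLpNorm_congr_norm_ae (g := (φ : Circ → ℂ))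
        (Filter.Eventually.of_forall fun t => norm_star _)]
      exact Lp.eLpNorm_lt_top φ⟩).toLp _

/-- Complex conjugation on `L²`. -/
def conjL2 (x : L2) : L2 :=
  (show MemLp (fun t => star ((x : Circ → ℂ) t)) 2 μC from
    ⟨continuous_star.comp_aestronglyMeasurable (Lp.aestronglyMeasurable x), by
      rw [eLpNorm_congr_norm_ae (g := (x : Circ → ℂ))
        (Filter.Eventually.of_forall fun t => norm_star _)]
      exact Lp.eLpNorm_lt_top x⟩).toLp _

/-- The inclusion `L^∞ ⊆ L²` (the measure is finite). -/
def toL2 (φ : Linf) : L2 := ((Lp.memLp φ).mono_exponent le_top).toLp φ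

/-- The constant function `c` as an element of `L^∞`. -/
def constInf (c : ℂ) : Linf := (memLp_const c).toLp (fun _ => c)

/-- An `L^∞` function is constant (a.e.). -/
def IsConst (φ : Linf) : Prop := ∃ c : ℂ, φ = constInf c

/-- `φ ∈ H^∞ = L^∞ ∩ H²`: the negative Fourier coefficients of `φ` vanish. -/
def MemHinf (φ : Linf) : Prop := ∀ n : ℤ, n < 0 → fourierCoeff (φ : Circ → ℂ) n = 0

/-- The coordinate function `z` as an element of `L^∞`. -/
def zInf : Linf := fourierLp (T := 2 * Real.pi) ⊤ 1

/-- The function `z̄` as an element of `L^∞`. -/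
def zbarInf : Linf := fourierLp (T := 2 * Real.pi) ⊤ (-1)

/-- The antiunitary operator `V : h ↦ z̄ ⬝ conj h` on `L²`. -/
def Vmap (x : L2) : L2 := mul zbarInf (conjL2 x)

/-- `φ₋ = P₋ φ` for `φ ∈ L^∞`, viewed inside `L²`. -/
def mI (φ : Linf) : L2 := Pm (toL2 φ)

/-- The rank-one operator `p ⊗ q : x ↦ ⟪x, q⟫ · p` (the inner product being conjugate-linear
in `q`). -/
def rankOne {E : Type*} [NormedAddCommGroup E] [InnerProductSpace ℂ E] (p q : E) : E →L[ℂ] E :=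
  (innerSL ℂ q).smulRight p

/-- The Hilbert space direct sum `L² ⊕ L²`. -/
abbrev L2sq : Type := WithLp 2 (L2 × L2)

/-- A pair of `L²` functions, viewed as a vector in `L² ⊕ L²`. -/
def pair (x y : L2) : L2sq := (WithLp.equiv 2 (L2 × L2)).symm (x, y)

/-- Notation for the pointwise product in `L^∞`. -/
scoped infixl:70 " ⊙ " => GSIO.mulInf

/-- The Toeplitz operator `T_φ = P₊ M_φ P₊` (viewed as acting on the corner `H²` of `L²`). -/
def Toeplitz (φ : Linf) : L2 →L[ℂ] L2 := Pp ∘L mul φ ∘L Pp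

/-- The Hankel operator `H_φ = P₋ M_φ P₊ : H² → (H²)^⊥` (as a corner operator on `L²`). -/
def Hankel (φ : Linf) : L2 →L[ℂ] L2 := Pm ∘L mul φ ∘L Pp

/-- The dual Toeplitz operator `T̃_φ = P₋ M_φ P₋` on `(H²)^⊥` (as a corner operator on `L²`). -/
def dualToeplitz (φ : Linf) : L2 →L[ℂ] L2 := Pm ∘L mul φ ∘L Pm

/-- The generalized Cauchy singular integral operator with symbol `[[f, u], [g, v]]`:
`R x = P₊ f P₊ x + P₋ g P₊ x + P₊ u P₋ x + P₋ v P₋ x`. -/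
def Rop (f u g v : Linf) : L2 →L[ℂ] L2 :=
  Pp ∘L mul f ∘L Pp + Pm ∘L mul g ∘L Pp + Pp ∘L mul u ∘L Pm + Pm ∘L mul v ∘L Pm

/-- The singular integral operator `S_{f,g} = M_f P₊ + M_g P₋` on `L²`. -/
def Sop (f g : Linf) : L2 →L[ℂ] L2 := mul f ∘L Pp + mul g ∘L Pm



/-- Negation `t ↦ -t` preserves the Haar measure of the circle. -/
theorem mp_neg : MeasurePreserving (fun t : Circ => -t) μC μC :=
  Measure.measurePreserving_neg μC

/-- Composition with `t ↦ -t` on `L²`. -/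
def reflL2 : L2 →L[ℂ] L2 :=
  (Lp.compMeasurePreservingₗᵢ ℂ (fun t : Circ => -t) mp_neg).toContinuousLinearMap

/-- Composition with `t ↦ -t` on `L^∞`: for `φ ∈ L^∞`, `φ̃(z) = φ(z̄)`. -/
def reflInf (φ : Linf) : Linf := Lp.compMeasurePreserving (fun t : Circ => -t) mp_neg φ

/-- `φ* (z) = conj (φ(z̄))`. -/
def starInf (φ : Linf) : Linf := conjInf (reflInf φ)

/-- The flip operator `J : (Jh)(z) = z̄ · h(z̄)` on `L²`. -/
def Jop : L2 →L[ℂ] L2 := mul zbarInf ∘L reflL2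

/-- The Hankel operator `𝕳_φ = P₊ M_φ J` on `H²` (as a corner operator on `L²`). -/
def HankelPlus (φ : Linf) : L2 →L[ℂ] L2 := Pp ∘L mul φ ∘L Jop ∘L Pp

/-- The adjoint `H*_φ` of the Hankel operator `H_φ`. -/
def HankelAdj (φ : Linf) : L2 →L[ℂ] L2 := ContinuousLinearMap.adjoint (Hankel φ)

/-- `θ ∈ L^∞` is an inner function: `θ ∈ H^∞` and `|θ| = 1` a.e. -/
def IsInner (θ : Linf) : Prop := MemHinf θ ∧ ∀ᵐ t ∂μC, ‖(θ : Circ → ℂ) t‖ = 1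

/-- The orthogonal projection of `L²` onto `K_θ^⊥ = θH² ⊕ z̄·conj(H²)`, namely
`P₋ + M_θ P₊ M_{conj θ}`. -/
def Qproj (θ : Linf) : L2 →L[ℂ] L2 := Pm + mul θ ∘L Pp ∘L mul (conjInf θ)

abbrev e (n : ℤ) : L2 := fourierLp 2 n

def co (x : L2) (n : ℤ) : ℂ := fourierCoeff (x : Circ → ℂ) n

theorem co_eq_inner (x : L2) (n : ℤ) : co x n = inner ℂ (e n) x := by
  rw [co, ← fourierBasis_repr, fourierBasis.repr_apply_apply, coe_fourierBasis]

theorem ext_co {x y : L2} (h : ∀ n, co x n = co y n) : x = y := by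
  have : fourierBasis.repr x = fourierBasis.repr y := by
    apply lp.ext; funext n
    simpa only [fourierBasis_repr, co] using h n
  exact fourierBasis.repr.injective this

theorem co_add (x y : L2) (n : ℤ) : co (x + y) n = co x n + co y n := by
  simp [co_eq_inner, inner_add_right]

theorem co_sub (x y : L2) (n : ℤ) : co (x - y) n = co x n - co y n := by
  simp [co_eq_inner, inner_sub_right]

theorem co_smul (c : ℂ) (x : L2) (n : ℤ) : co (c • x) n = c * co x n := by
  simp [co_eq_inner, inner_smul_right]

theorem co_zero (n : ℤ) : co (0 : L2) n = 0 := by simp [co_eq_inner]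

theorem co_e (m n : ℤ) : co (e m) n = if n = m then 1 else 0 := by
  rw [co_eq_inner]
  have := orthonormal_iff_ite.mp (orthonormal_fourier (T := 2 * Real.pi)) n m
  simpa using this

theorem mem_Hardy_iff {x : L2} : x ∈ Hardy ↔ ∀ n : ℤ, n < 0 → co x n = 0 := Iff.rfl

theorem e_mem_Hardy {n : ℤ} (hn : 0 ≤ n) : e n ∈ Hardy := by
  intro k hk
  have : co (e n) k = 0 := by rw [co_e]; simp [show k ≠ n by omega]
  exact this

theorem e_neg_mem_orth {n : ℤ} (hn : n < 0) : e n ∈ Hardyᗮ := by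
  rw [Submodule.mem_orthogonal]
  intro u hu
  have h1 : co u n = 0 := hu n hn
  rw [co_eq_inner] at h1
  rw [← inner_conj_symm, h1, map_zero]

theorem Pp_apply (x : L2) : Pp x = (Hardy.orthogonalProjectionOnto x : L2) := rfl

theorem Pp_mem (x : L2) : Pp x ∈ Hardy := (Hardy.orthogonalProjectionOnto x).2

theorem Pp_of_mem {x : L2} (h : x ∈ Hardy) : Pp x = x := by
  rw [Pp_apply, ← Submodule.starProjection_apply, Submodule.starProjection_eq_self_iff.mpr h]

theorem co_Pp (x : L2) (n : ℤ) : co (Pp x) n = if n < 0 then 0 else co x n := by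
  split_ifs with h
  · exact (Pp_mem x) n h
  · have horth : x - Pp x ∈ Hardyᗮ := Hardy.sub_starProjection_mem_orthogonal x
    rw [Submodule.mem_orthogonal] at horth
    have h2 : (inner ℂ (e n) (x - Pp x) : ℂ) = 0 := by
      simpa [Pp_apply] using horth (e n) (e_mem_Hardy (not_lt.mp h))
    have h3 : co x n - co (Pp x) n = 0 := by
      rw [← co_sub, co_eq_inner, h2]
    exact (sub_eq_zero.mp h3).symm
    
theorem Pm_apply (x : L2) : Pm x = x - Pp x := rfl

theorem co_Pm (x : L2) (n : ℤ) : co (Pm x) n = if n < 0 then co x n else 0 := by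
  rw [Pm_apply, co_sub, co_Pp]
  split_ifs <;> ring

theorem Pp_comp_Pp : Pp ∘L Pp = Pp := by
  refine ContinuousLinearMap.ext fun x => ?_; exact Pp_of_mem (Pp_mem x)

theorem Pp_add_Pm : Pp + Pm = ContinuousLinearMap.id ℂ L2 := by
  refine ContinuousLinearMap.ext fun x => ?_; simp [Pm_apply]

theorem Pp_comp_Pm : Pp ∘L Pm = 0 := by
  refine ContinuousLinearMap.ext fun x => ?_
  have : Pp (Pm x) = Pp x - Pp (Pp x) := by rw [Pm_apply, map_sub]
  simp only [ContinuousLinearMap.comp_apply, this]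
  rw [show Pp (Pp x) = Pp x from Pp_of_mem (Pp_mem x)]
  simp

theorem Pm_comp_Pp : Pm ∘L Pp = 0 := by
  refine ContinuousLinearMap.ext fun x => ?_
  simp only [ContinuousLinearMap.comp_apply, Pm_apply,
    show Pp (Pp x) = Pp x from Pp_of_mem (Pp_mem x)]
  simp

theorem Pm_comp_Pm : Pm ∘L Pm = Pm := by
  refine ContinuousLinearMap.ext fun x => ?_
  have h := congrArg (fun A : L2 →L[ℂ] L2 => A x) Pp_comp_Pm
  simp only [ContinuousLinearMap.comp_apply, ContinuousLinearMap.zero_apply] at h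
  simp only [ContinuousLinearMap.comp_apply]
  rw [Pm_apply (Pm x), h, sub_zero]

/-! ### coefficients of `L^∞` functions -/

def coI (φ : Linf) (n : ℤ) : ℂ := fourierCoeff (φ : Circ → ℂ) n

theorem MemHinf_iff {φ : Linf} : MemHinf φ ↔ ∀ n : ℤ, n < 0 → coI φ n = 0 := Iff.rfl

/-! ### coeFn lemmas -/

theorem mul_apply (φ : Linf) (x : L2) : mul φ x = mulFun φ x := rfl

theorem coeFn_mul (φ : Linf) (x : L2) :
    (mul φ x : Circ → ℂ) =ᵐ[μC] fun t => (φ : Circ → ℂ) t * (x : Circ → ℂ) t := by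
  rw [mul_apply, mulFun]
  filter_upwards [MemLp.coeFn_toLp ((Lp.memLp x).smul (r := 2) (Lp.memLp φ))] with t ht
  simpa [smul_eq_mul] using ht

theorem coeFn_toL2 (φ : Linf) : (toL2 φ : Circ → ℂ) =ᵐ[μC] (φ : Circ → ℂ) :=
  MemLp.coeFn_toLp _

theorem coeFn_conjL2 (x : L2) :
    (conjL2 x : Circ → ℂ) =ᵐ[μC] fun t => conj ((x : Circ → ℂ) t) :=
  MemLp.coeFn_toLp _

theorem coeFn_conjInf (φ : Linf) :
    (conjInf φ : Circ → ℂ) =ᵐ[μC] fun t => conj ((φ : Circ → ℂ) t) :=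
  MemLp.coeFn_toLp _

theorem coeFn_mulInf (φ ψ : Linf) :
    ((φ ⊙ ψ) : Circ → ℂ) =ᵐ[μC] fun t => (φ : Circ → ℂ) t * (ψ : Circ → ℂ) t := by
  rw [mulInf]
  filter_upwards [MemLp.coeFn_toLp ((Lp.memLp ψ).smul (r := ⊤) (Lp.memLp φ))] with t ht
  simpa [smul_eq_mul] using ht

theorem coeFn_constInf (c : ℂ) : (constInf c : Circ → ℂ) =ᵐ[μC] fun _ => c :=
  MemLp.coeFn_toLp _

theorem coeFn_e (n : ℤ) : (e n : Circ → ℂ) =ᵐ[μC] fourier n := coeFn_fourierLp 2 n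

theorem coeFn_zInf : (zInf : Circ → ℂ) =ᵐ[μC] fourier 1 := coeFn_fourierLp ⊤ 1

theorem coeFn_zbarInf : (zbarInf : Circ → ℂ) =ᵐ[μC] fourier (-1) := coeFn_fourierLp ⊤ (-1)

/-! ### integral formulas for coefficients -/

theorem co_def (x : L2) (n : ℤ) :
    co x n = ∫ t, fourier (-n) t * (x : Circ → ℂ) t ∂μC := by
  rw [co, fourierCoeff]
  simp [smul_eq_mul]

theorem coI_def (φ : Linf) (n : ℤ) :
    coI φ n = ∫ t, fourier (-n) t * (φ : Circ → ℂ) t ∂μC := by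
  rw [coI, fourierCoeff]
  simp [smul_eq_mul]

theorem co_mul_zbar (x : L2) (n : ℤ) : co (mul zbarInf x) n = co x (n + 1) := by
  rw [co_def, co_def]
  apply integral_congr_ae
  filter_upwards [coeFn_mul zbarInf x, coeFn_zbarInf] with t h1 h2
  rw [h1, h2, show (-(n+1) : ℤ) = -n + -1 by ring, fourier_add]
  ring

theorem co_mul_z (x : L2) (n : ℤ) : co (mul zInf x) n = co x (n - 1) := by
  rw [co_def, co_def]
  apply integral_congr_ae
  filter_upwards [coeFn_mul zInf x, coeFn_zInf] with t h1 h2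
  rw [h1, h2, show (-(n-1) : ℤ) = -n + 1 by ring, fourier_add]
  ring

theorem co_mul_e (φ : Linf) (m n : ℤ) : co (mul φ (e m)) n = coI φ (n - m) := by
  rw [co_def, coI_def]
  apply integral_congr_ae
  filter_upwards [coeFn_mul φ (e m), coeFn_e m] with t h1 h2
  rw [h1, h2, show (-(n-m) : ℤ) = -n + m by ring, fourier_add]
  ring

theorem co_conjL2 (x : L2) (n : ℤ) : co (conjL2 x) n = conj (co x (-n)) := by
  rw [co_def, co_def, ← integral_conj]
  apply integral_congr_ae
  filter_upwards [coeFn_conjL2 x] with t h1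
  rw [h1]
  rw [show (-n : ℤ) = -(-(-n)) by ring, fourier_neg]
  simp only [map_mul, RingHomCompTriple.comp_apply, RingHom.id_apply, starRingEnd_self_apply]
  ring_nf

theorem coI_conjInf (φ : Linf) (n : ℤ) : coI (conjInf φ) n = conj (coI φ (-n)) := by
  rw [coI_def, coI_def, ← integral_conj]
  apply integral_congr_ae
  filter_upwards [coeFn_conjInf φ] with t h1
  rw [h1]
  rw [show (-n : ℤ) = -(-(-n)) by ring, fourier_neg]
  simp only [map_mul, RingHomCompTriple.comp_apply, RingHom.id_apply, starRingEnd_self_apply]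
  ring_nf

theorem co_toL2 (φ : Linf) (n : ℤ) : co (toL2 φ) n = coI φ n := by
  rw [co_def, coI_def]
  apply integral_congr_ae
  filter_upwards [coeFn_toL2 φ] with t h1
  rw [h1]

/-! ### `L²` extensionality and algebra of multiplication operators -/

theorem toL2_add (φ ψ : Linf) : toL2 (φ + ψ) = toL2 φ + toL2 ψ := by
  apply Lp.ext
  filter_upwards [coeFn_toL2 (φ + ψ), coeFn_toL2 φ, coeFn_toL2 ψ, Lp.coeFn_add φ ψ,
    Lp.coeFn_add (toL2 φ) (toL2 ψ)] with t h1 h2 h3 h4 h5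
  rw [h1, h4, h5]
  simp [h2, h3]

theorem toL2_smul (c : ℂ) (φ : Linf) : toL2 (c • φ) = c • toL2 φ := by
  apply Lp.ext
  filter_upwards [coeFn_toL2 (c • φ), coeFn_toL2 φ, Lp.coeFn_smul c φ,
    Lp.coeFn_smul c (toL2 φ)] with t h1 h2 h3 h4
  rw [h1, h3, h4]
  simp [h2]

theorem toL2_sub (φ ψ : Linf) : toL2 (φ - ψ) = toL2 φ - toL2 ψ := by
  have h : φ - ψ + ψ = φ := by abel
  have := toL2_add (φ - ψ) ψ
  rw [h] at this
  rw [this]; abel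

theorem conjInf_conjInf (φ : Linf) : conjInf (conjInf φ) = φ := by
  apply Lp.ext
  filter_upwards [coeFn_conjInf (conjInf φ), coeFn_conjInf φ] with t h1 h2
  rw [h1, h2]
  simp

theorem conjInf_sub_smul (c : ℂ) (φ ψ : Linf) :
    conjInf (φ - c • ψ) = conjInf φ - conj c • conjInf ψ := by
  apply Lp.ext
  filter_upwards [coeFn_conjInf (φ - c • ψ), coeFn_conjInf φ, coeFn_conjInf ψ,
    Lp.coeFn_sub φ (c • ψ), Lp.coeFn_smul c ψ,
    Lp.coeFn_sub (conjInf φ) (conj c • conjInf ψ),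
    Lp.coeFn_smul (conj c) (conjInf ψ)] with t h1 h2 h3 h4 h5 h6 h7
  rw [h1, h6, h4]
  simp only [Pi.sub_apply, Pi.smul_apply, smul_eq_mul, h5, h7, h2, h3]
  simp [map_sub, map_mul]

theorem mul_comp (φ ψ : Linf) : mul φ ∘L mul ψ = mul (φ ⊙ ψ) := by
  refine ContinuousLinearMap.ext fun x => ?_
  apply Lp.ext
  filter_upwards [coeFn_mul φ (mul ψ x), coeFn_mul ψ x, coeFn_mul (φ ⊙ ψ) x,
    coeFn_mulInf φ ψ] with t h1 h2 h3 h4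
  simp only [ContinuousLinearMap.comp_apply]
  rw [h1, h2, h3, h4]
  ring

theorem mulInf_comm (φ ψ : Linf) : φ ⊙ ψ = ψ ⊙ φ := by
  apply Lp.ext
  filter_upwards [coeFn_mulInf φ ψ, coeFn_mulInf ψ φ] with t h1 h2
  rw [h1, h2]; ring

theorem mul_swap (φ ψ : Linf) : mul φ ∘L mul ψ = mul ψ ∘L mul φ := by
  rw [mul_comp, mul_comp, mulInf_comm]

theorem mul_add_symbol (φ ψ : Linf) : mul (φ + ψ) = mul φ + mul ψ := by
  refine ContinuousLinearMap.ext fun x => ?_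
  apply Lp.ext
  filter_upwards [coeFn_mul (φ + ψ) x, coeFn_mul φ x, coeFn_mul ψ x, Lp.coeFn_add φ ψ,
    Lp.coeFn_add (mul φ x) (mul ψ x)] with t h1 h2 h3 h4 h5
  simp only [ContinuousLinearMap.add_apply]
  rw [h1, h5]
  simp only [Pi.add_apply, h2, h3, h4]
  ring

theorem mul_smul_symbol (c : ℂ) (φ : Linf) : mul (c • φ) = c • mul φ := by
  refine ContinuousLinearMap.ext fun x => ?_
  apply Lp.ext
  filter_upwards [coeFn_mul (c • φ) x, coeFn_mul φ x, Lp.coeFn_smul c φ,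
    Lp.coeFn_smul c (mul φ x)] with t h1 h2 h3 h4
  simp only [ContinuousLinearMap.smul_apply]
  rw [h1, h4]
  simp only [Pi.smul_apply, smul_eq_mul, h2, h3]
  ring

theorem mul_sub_symbol (φ ψ : Linf) : mul (φ - ψ) = mul φ - mul ψ := by
  have h : φ - ψ + ψ = φ := by abel
  have := mul_add_symbol (φ - ψ) ψ
  rw [h] at this
  rw [this]; abel

theorem mul_zbar_z : mul zbarInf ∘L mul zInf = ContinuousLinearMap.id ℂ L2 := by
  refine ContinuousLinearMap.ext fun x => ?_
  apply Lp.ext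
  filter_upwards [coeFn_mul zbarInf (mul zInf x), coeFn_mul zInf x, coeFn_zInf,
    coeFn_zbarInf] with t h1 h2 h3 h4
  simp only [ContinuousLinearMap.comp_apply, ContinuousLinearMap.id_apply]
  rw [h1, h2, h3, h4, ← mul_assoc, ← fourier_add]
  norm_num [fourier_zero]

theorem mul_z_zbar : mul zInf ∘L mul zbarInf = ContinuousLinearMap.id ℂ L2 := by
  refine ContinuousLinearMap.ext fun x => ?_
  apply Lp.ext
  filter_upwards [coeFn_mul zInf (mul zbarInf x), coeFn_mul zbarInf x, coeFn_zInf,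
    coeFn_zbarInf] with t h1 h2 h3 h4
  simp only [ContinuousLinearMap.comp_apply, ContinuousLinearMap.id_apply]
  rw [h1, h2, h3, h4, ← mul_assoc, ← fourier_add]
  norm_num [fourier_zero]

/-! ### adjoints -/

theorem adjoint_mul (φ : Linf) : adjoint (mul φ) = mul (conjInf φ) := by
  symm
  rw [ContinuousLinearMap.eq_adjoint_iff]
  intro x y
  rw [MeasureTheory.L2.inner_def, MeasureTheory.L2.inner_def]
  apply integral_congr_ae
  filter_upwards [coeFn_mul (conjInf φ) x, coeFn_mul φ y, coeFn_conjInf φ] with t h1 h2 h3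
  simp only [RCLike.inner_apply, h1, h2, h3, map_mul, starRingEnd_self_apply]
  ring

theorem adjoint_Pp : adjoint Pp = Pp := by
  symm
  rw [ContinuousLinearMap.eq_adjoint_iff]
  intro x y
  exact Hardy.inner_starProjection_left_eq_right x y

theorem adjoint_Pm : adjoint Pm = Pm := by
  have : Pm = ContinuousLinearMap.id ℂ L2 - Pp := rfl
  rw [this, map_sub, adjoint_Pp, adjoint_id]

/-! ### rank one operators -/

theorem rankOne_apply {E : Type*} [NormedAddCommGroup E] [InnerProductSpace ℂ E]
    (p q x : E) : rankOne p q x = (inner ℂ q x : ℂ) • p := rfl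

theorem comp_rankOne (A : L2 →L[ℂ] L2) (p q : L2) : A * rankOne p q = rankOne (A p) q := by
  refine ContinuousLinearMap.ext fun x => ?_
  simp [ContinuousLinearMap.mul_apply, rankOne_apply, _root_.map_smul]

theorem rankOne_comp (A : L2 →L[ℂ] L2) (p q : L2) :
    rankOne p q * A = rankOne p (adjoint A q) := by
  refine ContinuousLinearMap.ext fun x => ?_
  simp only [ContinuousLinearMap.mul_apply, rankOne_apply]
  rw [ContinuousLinearMap.adjoint_inner_left]

theorem rankOne_zero_right (p : L2) : rankOne p (0 : L2) = 0 := by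
  refine ContinuousLinearMap.ext fun x => ?_
  simp [rankOne_apply]

theorem rankOne_zero_left (q : L2) : rankOne (0 : L2) q = 0 := by
  refine ContinuousLinearMap.ext fun x => ?_
  simp [rankOne_apply]

/-! ### action on basis vectors -/

theorem mul_zbar_e (n : ℤ) : mul zbarInf (e n) = e (n - 1) := by
  refine ext_co fun k => ?_
  rw [co_mul_zbar, co_e, co_e]
  congr 1
  simp only [eq_iff_iff]
  omega

theorem mul_z_e (n : ℤ) : mul zInf (e n) = e (n + 1) := by
  refine ext_co fun k => ?_
  rw [co_mul_z, co_e, co_e]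
  congr 1
  simp only [eq_iff_iff]
  omega

theorem Pp_e_zero : Pp (e 0) = e 0 := Pp_of_mem (e_mem_Hardy le_rfl)

theorem Pp_e_negone : Pp (e (-1)) = 0 := by
  refine ext_co fun k => ?_
  rw [co_Pp, co_e, co_zero]
  split_ifs with h1 h2 <;> first | rfl | omega

theorem Pm_e_zero : Pm (e 0) = 0 := by
  rw [Pm_apply, Pp_e_zero, sub_self]

theorem Pm_e_negone : Pm (e (-1)) = e (-1) := by
  rw [Pm_apply, Pp_e_negone, sub_zero]

theorem mul_e_zero (φ : Linf) : mul φ (e 0) = toL2 φ := by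
  apply Lp.ext
  filter_upwards [coeFn_mul φ (e 0), coeFn_e 0, coeFn_toL2 φ] with t h1 h2 h3
  rw [h1, h2, h3, fourier_zero, mul_one]

/-! ### commutator identities -/

theorem comp_eq_mul (A B : L2 →L[ℂ] L2) : A ∘L B = A * B := rfl

theorem F1 : Pm * mul zInf * Pp = 0 := by
  refine ContinuousLinearMap.ext fun x => ext_co fun k => ?_
  simp only [ContinuousLinearMap.mul_apply, ContinuousLinearMap.zero_apply]
  rw [co_Pm, co_mul_z, co_Pp, co_zero]
  split_ifs <;> first | rfl | omega

theorem F2 : Pp * mul zbarInf * Pm = 0 := by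
  refine ContinuousLinearMap.ext fun x => ext_co fun k => ?_
  simp only [ContinuousLinearMap.mul_apply, ContinuousLinearMap.zero_apply]
  rw [co_Pp, co_mul_zbar, co_Pm, co_zero]
  split_ifs <;> first | rfl | omega

theorem F3 : Pm * mul zbarInf * Pp = rankOne (e (-1)) (e 0) := by
  refine ContinuousLinearMap.ext fun x => ext_co fun k => ?_
  simp only [ContinuousLinearMap.mul_apply]
  rw [co_Pm, co_mul_zbar, co_Pp, rankOne_apply, co_smul, co_e, ← co_eq_inner]
  by_cases h : k = -1
  · subst h; norm_num
  · split_ifs with h1 h2 <;> first | omega | simp [h]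

theorem F4 : Pp * mul zInf * Pm = rankOne (e 0) (e (-1)) := by
  refine ContinuousLinearMap.ext fun x => ext_co fun k => ?_
  simp only [ContinuousLinearMap.mul_apply]
  rw [co_Pp, co_mul_z, co_Pm, rankOne_apply, co_smul, co_e, ← co_eq_inner]
  by_cases h : k = 0
  · subst h; norm_num
  · split_ifs with h1 h2 <;> first | omega | simp [h]

/-! ### operator algebra: commutators with the shift -/

theorem onePM : Pp + Pm = (1 : L2 →L[ℂ] L2) := Pp_add_Pm

theorem PpPp : Pp * Pp = Pp := Pp_comp_Pp
theorem PpPm : Pp * Pm = 0 := Pp_comp_Pm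
theorem PmPp : Pm * Pp = 0 := Pm_comp_Pp
theorem PmPm : Pm * Pm = Pm := Pm_comp_Pm

theorem zz' : mul zInf * mul zbarInf = 1 := mul_z_zbar
theorem z'z : mul zbarInf * mul zInf = 1 := mul_zbar_z

theorem A1 : Pp * mul zbarInf * Pp = Pp * mul zbarInf := by
  conv_rhs => rw [← mul_one (Pp * mul zbarInf), ← onePM]
  rw [mul_add, F2, add_zero]

theorem A2 : Pp * mul zInf * Pp = mul zInf * Pp := by
  conv_rhs => rw [← one_mul (mul zInf), ← onePM]
  rw [add_mul, add_mul, F1, add_zero]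

theorem A3 : Pm * mul zInf * Pm = Pm * mul zInf := by
  conv_rhs => rw [← mul_one (Pm * mul zInf), ← onePM]
  rw [mul_add, F1, zero_add]

theorem A4 : Pm * mul zbarInf * Pm = mul zbarInf * Pm := by
  conv_rhs => rw [← one_mul (mul zbarInf), ← onePM]
  rw [add_mul, add_mul, F2, zero_add]

theorem B1 : Pp * mul zbarInf = mul zbarInf * Pp - rankOne (e (-1)) (e 0) := by
  have h : mul zbarInf * Pp = Pp * mul zbarInf * Pp + Pm * mul zbarInf * Pp := by
    rw [← add_mul, ← add_mul, onePM, one_mul]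
  rw [h, A1, F3]; abel

theorem B2 : Pp * mul zInf = mul zInf * Pp + rankOne (e 0) (e (-1)) := by
  have h : Pp * mul zInf = Pp * mul zInf * Pp + Pp * mul zInf * Pm := by
    rw [← mul_add, onePM, mul_one]
  rw [h, A2, F4]

theorem B3 : Pm * mul zInf = mul zInf * Pm - rankOne (e 0) (e (-1)) := by
  have h : mul zInf * Pm = Pp * mul zInf * Pm + Pm * mul zInf * Pm := by
    rw [← add_mul, ← add_mul, onePM, one_mul]
  rw [h, A3, F4]; abel

theorem B4 : Pm * mul zbarInf = mul zbarInf * Pm + rankOne (e (-1)) (e 0) := by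
  have h : Pm * mul zbarInf = Pm * mul zbarInf * Pp + Pm * mul zbarInf * Pm := by
    rw [← mul_add, onePM, mul_one]
  rw [h, A4, F3]; abel

theorem NP : mul zInf * Pp * mul zbarInf = Pp - rankOne (e 0) (e 0) := by
  rw [mul_assoc, B1, mul_sub, ← mul_assoc, zz', one_mul, comp_rankOne, mul_z_e]
  norm_num

theorem NQ : mul zbarInf * Pm * mul zInf = Pm - rankOne (e (-1)) (e (-1)) := by
  rw [mul_assoc, B3, mul_sub, ← mul_assoc, z'z, one_mul, comp_rankOne, mul_zbar_e]
  norm_num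

/-! ### tail-generalized rewriting rules -/

theorem g1 (X : L2 →L[ℂ] L2) :
    Pp * (mul zbarInf * (Pp * X)) = Pp * (mul zbarInf * X) := by
  calc Pp * (mul zbarInf * (Pp * X)) = (Pp * mul zbarInf * Pp) * X := by
        simp only [mul_assoc]
    _ = Pp * (mul zbarInf * X) := by rw [A1, mul_assoc]

theorem g2 (X : L2 →L[ℂ] L2) :
    Pp * (mul zInf * (Pp * X)) = mul zInf * (Pp * X) := by
  calc Pp * (mul zInf * (Pp * X)) = (Pp * mul zInf * Pp) * X := by
        simp only [mul_assoc]
    _ = mul zInf * (Pp * X) := by rw [A2, mul_assoc]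

theorem g3 (X : L2 →L[ℂ] L2) :
    Pm * (mul zInf * (Pm * X)) = Pm * (mul zInf * X) := by
  calc Pm * (mul zInf * (Pm * X)) = (Pm * mul zInf * Pm) * X := by
        simp only [mul_assoc]
    _ = Pm * (mul zInf * X) := by rw [A3, mul_assoc]

theorem g4 (X : L2 →L[ℂ] L2) :
    Pm * (mul zbarInf * (Pm * X)) = mul zbarInf * (Pm * X) := by
  calc Pm * (mul zbarInf * (Pm * X)) = (Pm * mul zbarInf * Pm) * X := by
        simp only [mul_assoc]
    _ = mul zbarInf * (Pm * X) := by rw [A4, mul_assoc]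

theorem g1e : Pp * (mul zbarInf * Pp) = Pp * mul zbarInf := by
  rw [← mul_assoc, A1]

theorem g2e : Pp * (mul zInf * Pp) = mul zInf * Pp := by
  rw [← mul_assoc, A2]

theorem g3e : Pm * (mul zInf * Pm) = Pm * mul zInf := by
  rw [← mul_assoc, A3]

theorem g4e : Pm * (mul zbarInf * Pm) = mul zbarInf * Pm := by
  rw [← mul_assoc, A4]

theorem gswape (φ ψ : Linf) : mul φ * mul ψ = mul ψ * mul φ := mul_swap φ ψ

theorem gswap (φ ψ : Linf) (X : L2 →L[ℂ] L2) :
    mul φ * (mul ψ * X) = mul ψ * (mul φ * X) := by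
  rw [← mul_assoc, ← mul_assoc, gswape]

theorem gzz (X : L2 →L[ℂ] L2) : mul zInf * (mul zbarInf * X) = X := by
  rw [← mul_assoc, zz', one_mul]

theorem gz'z (X : L2 →L[ℂ] L2) : mul zbarInf * (mul zInf * X) = X := by
  rw [← mul_assoc, z'z, one_mul]

theorem gNQ (X : L2 →L[ℂ] L2) :
    mul zbarInf * (Pm * (mul zInf * X)) = Pm * X - rankOne (e (-1)) (e (-1)) * X := by
  calc mul zbarInf * (Pm * (mul zInf * X)) = (mul zbarInf * Pm * mul zInf) * X := by
        simp only [mul_assoc]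
    _ = Pm * X - rankOne (e (-1)) (e (-1)) * X := by rw [NQ, sub_mul]

theorem gNP (X : L2 →L[ℂ] L2) :
    mul zInf * (Pp * (mul zbarInf * X)) = Pp * X - rankOne (e 0) (e 0) * X := by
  calc mul zInf * (Pp * (mul zbarInf * X)) = (mul zInf * Pp * mul zbarInf) * X := by
        simp only [mul_assoc]
    _ = Pp * X - rankOne (e 0) (e 0) * X := by rw [NP, sub_mul]

/-! ### corner lemmas -/

def lvec (φ : Linf) : L2 := Pp (mul φ (e (-1)))

theorem adjoint_mul' (A B : L2 →L[ℂ] L2) : adjoint (A * B) = adjoint B * adjoint A :=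
  ContinuousLinearMap.adjoint_comp A B

theorem cancel_aux {M : Type*} [AddCommGroup M] {x1 x2 r1 r2 : M}
    (h : x1 - r1 - (x2 - r2) = x1 - x2) : r1 = r2 := by
  have h2 : r1 - r2 = (x1 - x2) - (x1 - r1 - (x2 - r2)) := by abel
  rw [h, sub_self] at h2
  exact sub_eq_zero.mp h2

theorem gB1 (X : L2 →L[ℂ] L2) :
    Pp * (mul zbarInf * X) = mul zbarInf * (Pp * X) - rankOne (e (-1)) (e 0) * X := by
  calc Pp * (mul zbarInf * X) = (Pp * mul zbarInf) * X := by rw [mul_assoc]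
    _ = mul zbarInf * (Pp * X) - rankOne (e (-1)) (e 0) * X := by
        rw [B1, sub_mul, mul_assoc]

theorem gB3 (X : L2 →L[ℂ] L2) :
    Pm * (mul zInf * X) = mul zInf * (Pm * X) - rankOne (e 0) (e (-1)) * X := by
  calc Pm * (mul zInf * X) = (Pm * mul zInf) * X := by rw [mul_assoc]
    _ = mul zInf * (Pm * X) - rankOne (e 0) (e (-1)) * X := by
        rw [B3, sub_mul, mul_assoc]

theorem gB4 (X : L2 →L[ℂ] L2) :
    Pm * (mul zbarInf * X) = mul zbarInf * (Pm * X) + rankOne (e (-1)) (e 0) * X := by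
  calc Pm * (mul zbarInf * X) = (Pm * mul zbarInf) * X := by rw [mul_assoc]
    _ = mul zbarInf * (Pm * X) + rankOne (e (-1)) (e 0) * X := by
        rw [B4, add_mul, mul_assoc]

theorem Phi11 (a b : Linf) :
    Pp * (mul zbarInf * ((Pp * (mul a * (Pm * (mul b * Pp)))) * (mul zInf * Pp))) =
      Pp * (mul a * (Pm * (mul b * Pp))) - rankOne (lvec a) (lvec (conjInf b)) := by
  have h1 : (Pp * (mul a * (Pm * (mul b * Pp)))) * (mul zInf * Pp) =
      Pp * (mul a * (Pm * (mul zInf * (mul b * Pp)))) := by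
    simp only [mul_assoc]
    rw [g2e]
    rw [gswap b zInf Pp]
  rw [h1, g1, gswap zbarInf a, gNQ]
  rw [mul_sub, mul_sub]
  congr 1
  rw [rankOne_comp, comp_rankOne, comp_rankOne, adjoint_mul', adjoint_Pp, adjoint_mul]
  rfl

theorem PhiT11 (w : Linf) :
    Pp * (mul zbarInf * ((Pp * (mul w * Pp)) * (mul zInf * Pp))) = Pp * (mul w * Pp) := by
  have h1 : (Pp * (mul w * Pp)) * (mul zInf * Pp) =
      Pp * (mul zInf * (mul w * Pp)) := by
    simp only [mul_assoc]
    rw [g2e, gswap w zInf Pp]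
  rw [h1, g1, gz'z]

theorem K11 {a b c d w : Linf}
    (h : Pp * (mul a * (Pm * (mul b * Pp))) - Pp * (mul c * (Pm * (mul d * Pp))) =
      Pp * (mul w * Pp)) :
    rankOne (lvec a) (lvec (conjInf b)) = rankOne (lvec c) (lvec (conjInf d)) := by
  have H := congrArg
    (fun Y : L2 →L[ℂ] L2 => Pp * (mul zbarInf * (Y * (mul zInf * Pp)))) h
  simp only [sub_mul, mul_sub] at H
  rw [Phi11 a b, Phi11 c d, PhiT11 w, ← h] at H
  exact cancel_aux H

theorem cancel_aux2 {M : Type*} [AddCommGroup M] {fY gY fZ gZ fT gT r s : M}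
    (hY : fY - gY = -r) (hZ : fZ - gZ = s) (hT : fT = gT)
    (H : fY + fZ - (gY + gZ) = fT - gT) : r = s := by
  have h2 : -r + s = 0 := by
    rw [← hY, ← hZ]
    calc fY - gY + (fZ - gZ) = fY + fZ - (gY + gZ) := by abel
      _ = 0 := by rw [H, hT, sub_self]
  have h4 : s - r = 0 := by rw [← h2]; abel
  exact (sub_eq_zero.mp h4).symm

theorem cancel_aux3 {M : Type*} [AddCommGroup M] {f1 g1 f2 g2 fT gT r s : M}
    (h1 : f1 - g1 = -r) (h2 : f2 - g2 = -s) (hT : fT = gT)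
    (H : f1 - f2 - (g1 - g2) = fT - gT) : r = s := by
  have h3 : -r - -s = 0 := by
    rw [← h1, ← h2]
    calc f1 - g1 - (f2 - g2) = f1 - f2 - (g1 - g2) := by abel
      _ = 0 := by rw [H, hT, sub_self]
  have h4 : s - r = 0 := by rw [← h3]; abel
  exact (sub_eq_zero.mp h4).symm

theorem PsiY (a b : Linf) :
    Pp * (mul zbarInf * (Pp * (mul a * (Pm * (mul b * Pm))))) -
      (Pp * (mul a * (Pm * (mul b * Pm)))) * (mul zbarInf * Pm) =
      -(rankOne (lvec a) (mI (conjInf b))) := by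
  have h2 : (Pp * (mul a * (Pm * (mul b * Pm)))) * (mul zbarInf * Pm) =
      Pp * (mul a * (Pm * (mul zbarInf * (mul b * Pm)))) := by
    simp only [mul_assoc]
    rw [g4e, gswap b zbarInf Pm]
  rw [h2, g1, gswap zbarInf a, gB4 (mul b * Pm), mul_add, mul_add]
  rw [rankOne_comp, comp_rankOne, comp_rankOne, adjoint_mul', adjoint_Pm, adjoint_mul]
  simp only [ContinuousLinearMap.mul_apply, mul_e_zero]
  rw [show Pm (toL2 (conjInf b)) = mI (conjInf b) from rfl]
  abel

theorem PsiZ (c d : Linf) :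
    Pp * (mul zbarInf * (Pp * (mul c * (Pp * (mul d * Pm))))) -
      (Pp * (mul c * (Pp * (mul d * Pm)))) * (mul zbarInf * Pm) =
      rankOne (lvec c) (mI (conjInf d)) := by
  have h2 : (Pp * (mul c * (Pp * (mul d * Pm)))) * (mul zbarInf * Pm) =
      Pp * (mul c * (Pp * (mul zbarInf * (mul d * Pm)))) := by
    simp only [mul_assoc]
    rw [g4e, gswap d zbarInf Pm]
  rw [h2, g1, gswap zbarInf c, gB1 (mul d * Pm), mul_sub, mul_sub]
  rw [rankOne_comp, comp_rankOne, comp_rankOne, adjoint_mul', adjoint_Pm, adjoint_mul]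
  simp only [ContinuousLinearMap.mul_apply, mul_e_zero]
  rw [show Pm (toL2 (conjInf d)) = mI (conjInf d) from rfl]
  abel

theorem PsiT (w : Linf) :
    Pp * (mul zbarInf * (Pp * (mul w * Pm))) =
      (Pp * (mul w * Pm)) * (mul zbarInf * Pm) := by
  have h2 : (Pp * (mul w * Pm)) * (mul zbarInf * Pm) =
      Pp * (mul w * (mul zbarInf * Pm)) := by
    simp only [mul_assoc]
    rw [g4e]
  rw [h2, g1, gswap zbarInf w]

theorem K12 {a b c d w : Linf}
    (h : Pp * (mul a * (Pm * (mul b * Pm))) + Pp * (mul c * (Pp * (mul d * Pm))) =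
      Pp * (mul w * Pm)) :
    rankOne (lvec a) (mI (conjInf b)) = rankOne (lvec c) (mI (conjInf d)) := by
  have H := congrArg
    (fun Y : L2 →L[ℂ] L2 => Pp * (mul zbarInf * Y) - Y * (mul zbarInf * Pm)) h
  simp only [mul_add, add_mul] at H
  exact cancel_aux2 (PsiY a b) (PsiZ c d) (PsiT w) H

theorem Psi21X (a b : Linf) :
    (Pm * (mul a * (Pm * (mul b * Pp)))) * (mul zInf * Pp) -
      Pm * (mul zInf * (Pm * (mul a * (Pm * (mul b * Pp))))) =
      -(rankOne (mI a) (lvec (conjInf b))) := by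
  have h1 : (Pm * (mul a * (Pm * (mul b * Pp)))) * (mul zInf * Pp) =
      Pm * (mul a * (Pm * (mul zInf * (mul b * Pp)))) := by
    simp only [mul_assoc]
    rw [g2e, gswap b zInf Pp]
  rw [h1, g3, gswap zInf a, gB3 (mul b * Pp), mul_sub, mul_sub]
  rw [rankOne_comp, comp_rankOne, comp_rankOne, adjoint_mul', adjoint_Pp, adjoint_mul]
  simp only [ContinuousLinearMap.mul_apply, mul_e_zero]
  rw [show Pm (toL2 a) = mI a from rfl,
    show Pp (mul (conjInf b) (e (-1))) = lvec (conjInf b) from rfl]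
  abel

theorem Psi21T (w : Linf) :
    (Pm * (mul w * Pp)) * (mul zInf * Pp) = Pm * (mul zInf * (Pm * (mul w * Pp))) := by
  have h1 : (Pm * (mul w * Pp)) * (mul zInf * Pp) = Pm * (mul w * (mul zInf * Pp)) := by
    simp only [mul_assoc]
    rw [g2e]
  rw [h1, g3, gswap zInf w]

theorem K21 {a b c d w : Linf}
    (h : Pm * (mul a * (Pm * (mul b * Pp))) - Pm * (mul c * (Pm * (mul d * Pp))) =
      Pm * (mul w * Pp)) :
    rankOne (mI a) (lvec (conjInf b)) = rankOne (mI c) (lvec (conjInf d)) := by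
  have H := congrArg
    (fun Y : L2 →L[ℂ] L2 => Y * (mul zInf * Pp) - Pm * (mul zInf * Y)) h
  simp only [sub_mul, mul_sub] at H
  exact cancel_aux3 (Psi21X a b) (Psi21X c d) (Psi21T w) H

theorem Psi22X (a b : Linf) :
    Pm * (mul zInf * ((Pm * (mul a * (Pp * (mul b * Pm)))) * (mul zbarInf * Pm))) =
      Pm * (mul a * (Pp * (mul b * Pm))) - rankOne (mI a) (mI (conjInf b)) := by
  have h1 : (Pm * (mul a * (Pp * (mul b * Pm)))) * (mul zbarInf * Pm) =
      Pm * (mul a * (Pp * (mul zbarInf * (mul b * Pm)))) := by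
    simp only [mul_assoc]
    rw [g4e, gswap b zbarInf Pm]
  rw [h1, g3, gswap zInf a, gNP (mul b * Pm), mul_sub, mul_sub]
  congr 1
  rw [rankOne_comp, comp_rankOne, comp_rankOne, adjoint_mul', adjoint_Pm, adjoint_mul]
  simp only [ContinuousLinearMap.mul_apply, mul_e_zero]
  rw [show Pm (toL2 a) = mI a from rfl, show Pm (toL2 (conjInf b)) = mI (conjInf b) from rfl]

theorem Psi22T (w : Linf) :
    Pm * (mul zInf * ((Pm * (mul w * Pm)) * (mul zbarInf * Pm))) = Pm * (mul w * Pm) := by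
  have h1 : (Pm * (mul w * Pm)) * (mul zbarInf * Pm) = Pm * (mul w * (mul zbarInf * Pm)) := by
    simp only [mul_assoc]
    rw [g4e]
  rw [h1, g3, gswap zInf w, gzz]

theorem K22 {a b c d w : Linf}
    (h : Pm * (mul a * (Pp * (mul b * Pm))) - Pm * (mul c * (Pp * (mul d * Pm))) =
      Pm * (mul w * Pm)) :
    rankOne (mI a) (mI (conjInf b)) = rankOne (mI c) (mI (conjInf d)) := by
  have H := congrArg
    (fun Y : L2 →L[ℂ] L2 => Pm * (mul zInf * (Y * (mul zbarInf * Pm)))) h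
  simp only [sub_mul, mul_sub] at H
  rw [Psi22X a b, Psi22X c d, Psi22T w, ← h] at H
  exact cancel_aux H

/-! ### corner extraction -/

theorem mulmul (φ ψ : Linf) : mul φ * mul ψ = mul (φ ⊙ ψ) := mul_comp φ ψ

theorem Rop_eq (f u g v : Linf) :
    Rop f u g v = Pp * (mul f * Pp) + Pm * (mul g * Pp) + Pp * (mul u * Pm)
      + Pm * (mul v * Pm) := rfl

theorem lPpPp (Y : L2 →L[ℂ] L2) : Pp * (Pp * Y) = Pp * Y := by rw [← mul_assoc, PpPp]
theorem lPpPm (Y : L2 →L[ℂ] L2) : Pp * (Pm * Y) = 0 := by rw [← mul_assoc, PpPm, zero_mul]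
theorem lPmPp (Y : L2 →L[ℂ] L2) : Pm * (Pp * Y) = 0 := by rw [← mul_assoc, PmPp, zero_mul]
theorem lPmPm (Y : L2 →L[ℂ] L2) : Pm * (Pm * Y) = Pm * Y := by rw [← mul_assoc, PmPm]

theorem sand_sub (A B : L2 →L[ℂ] L2) (α β : Linf) :
    A * (mul α * B) - A * (mul β * B) = A * (mul (α - β) * B) := by
  rw [mul_sub_symbol, sub_mul, mul_sub]

theorem Pp_eqX (X : L2 →L[ℂ] L2) : Pp * X = X - Pm * X :=
  eq_sub_of_add_eq (by rw [← add_mul, onePM, one_mul])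

theorem Pm_eqX (X : L2 →L[ℂ] L2) : Pm * X = X - Pp * X :=
  eq_sub_of_add_eq (by rw [add_comm, ← add_mul, onePM, one_mul])

theorem prod_corners {f₁ u₁ g₁ v₁ f₂ u₂ g₂ v₂ f u g v : Linf}
    (h : Rop f₁ u₁ g₁ v₁ ∘L Rop f₂ u₂ g₂ v₂ = Rop f u g v) :
    (Pp * (mul f₁ * (Pp * (mul f₂ * Pp))) + Pp * (mul u₁ * (Pm * (mul g₂ * Pp)))
        = Pp * (mul f * Pp)) ∧
    (Pp * (mul f₁ * (Pp * (mul u₂ * Pm))) + Pp * (mul u₁ * (Pm * (mul v₂ * Pm)))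
        = Pp * (mul u * Pm)) ∧
    (Pm * (mul g₁ * (Pp * (mul f₂ * Pp))) + Pm * (mul v₁ * (Pm * (mul g₂ * Pp)))
        = Pm * (mul g * Pp)) ∧
    (Pm * (mul g₁ * (Pp * (mul u₂ * Pm))) + Pm * (mul v₁ * (Pm * (mul v₂ * Pm)))
        = Pm * (mul v * Pm)) := by
  have h' : Rop f₁ u₁ g₁ v₁ * Rop f₂ u₂ g₂ v₂ = Rop f u g v := h
  refine ⟨?_, ?_, ?_, ?_⟩
  · have H := congrArg (fun Y : L2 →L[ℂ] L2 => Pp * (Y * Pp)) h'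
    simpa only [Rop_eq, mul_add, add_mul, mul_assoc, lPpPp, lPpPm, lPmPp, lPmPm,
      PpPp, PpPm, PmPp, PmPm, zero_mul, mul_zero, add_zero, zero_add] using H
  · have H := congrArg (fun Y : L2 →L[ℂ] L2 => Pp * (Y * Pm)) h'
    simpa only [Rop_eq, mul_add, add_mul, mul_assoc, lPpPp, lPpPm, lPmPp, lPmPm,
      PpPp, PpPm, PmPp, PmPm, zero_mul, mul_zero, add_zero, zero_add] using H
  · have H := congrArg (fun Y : L2 →L[ℂ] L2 => Pm * (Y * Pp)) h'
    simpa only [Rop_eq, mul_add, add_mul, mul_assoc, lPpPp, lPpPm, lPmPp, lPmPm,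
      PpPp, PpPm, PmPp, PmPm, zero_mul, mul_zero, add_zero, zero_add] using H
  · have H := congrArg (fun Y : L2 →L[ℂ] L2 => Pm * (Y * Pm)) h'
    simpa only [Rop_eq, mul_add, add_mul, mul_assoc, lPpPp, lPpPm, lPmPp, lPmPm,
      PpPp, PpPm, PmPp, PmPm, zero_mul, mul_zero, add_zero, zero_add] using H

theorem sand_add (A B : L2 →L[ℂ] L2) (α β : Linf) :
    A * (mul α * B) + A * (mul β * B) = A * (mul (α + β) * B) := by
  rw [mul_add_symbol, add_mul, mul_add]

theorem rank_ids {f₁ u₁ g₁ v₁ f₂ u₂ g₂ v₂ f u g v : Linf}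
    (h : Rop f₁ u₁ g₁ v₁ ∘L Rop f₂ u₂ g₂ v₂ = Rop f u g v) :
    (rankOne (lvec f₁) (lvec (conjInf f₂)) = rankOne (lvec u₁) (lvec (conjInf g₂))) ∧
    (rankOne (lvec f₁) (mI (conjInf u₂)) = rankOne (lvec u₁) (mI (conjInf v₂))) ∧
    (rankOne (mI g₁) (lvec (conjInf f₂)) = rankOne (mI v₁) (lvec (conjInf g₂))) ∧
    (rankOne (mI g₁) (mI (conjInf u₂)) = rankOne (mI v₁) (mI (conjInf v₂))) := by
  obtain ⟨hPP, hPM, hMP, hMM⟩ := prod_corners h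
  refine ⟨?_, ?_, ?_, ?_⟩
  · rw [Pp_eqX (mul f₂ * Pp), mul_sub, mul_sub,
      show mul f₁ * (mul f₂ * Pp) = mul (f₁ ⊙ f₂) * Pp by rw [← mul_assoc, mulmul]] at hPP
    have e2 : Pp * (mul f₁ * (Pm * (mul f₂ * Pp))) - Pp * (mul u₁ * (Pm * (mul g₂ * Pp)))
        = Pp * (mul (f₁ ⊙ f₂) * Pp) - Pp * (mul f * Pp) := by rw [← hPP]; abel
    rw [sand_sub] at e2
    exact K11 e2
  · rw [Pp_eqX (mul u₂ * Pm), mul_sub, mul_sub,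
      show mul f₁ * (mul u₂ * Pm) = mul (f₁ ⊙ u₂) * Pm by rw [← mul_assoc, mulmul],
      Pm_eqX (mul v₂ * Pm), mul_sub, mul_sub,
      show mul u₁ * (mul v₂ * Pm) = mul (u₁ ⊙ v₂) * Pm by rw [← mul_assoc, mulmul]] at hPM
    have e2 : Pp * (mul f₁ * (Pm * (mul u₂ * Pm))) + Pp * (mul u₁ * (Pp * (mul v₂ * Pm)))
        = Pp * (mul (f₁ ⊙ u₂) * Pm) + Pp * (mul (u₁ ⊙ v₂) * Pm) - Pp * (mul u * Pm) := by
      rw [← hPM]; abel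
    rw [sand_add, sand_sub] at e2
    exact K12 e2
  · rw [Pp_eqX (mul f₂ * Pp), mul_sub, mul_sub,
      show mul g₁ * (mul f₂ * Pp) = mul (g₁ ⊙ f₂) * Pp by rw [← mul_assoc, mulmul]] at hMP
    have e2 : Pm * (mul g₁ * (Pm * (mul f₂ * Pp))) - Pm * (mul v₁ * (Pm * (mul g₂ * Pp)))
        = Pm * (mul (g₁ ⊙ f₂) * Pp) - Pm * (mul g * Pp) := by rw [← hMP]; abel
    rw [sand_sub] at e2
    exact K21 e2
  · rw [Pm_eqX (mul v₂ * Pm), mul_sub, mul_sub,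
      show mul v₁ * (mul v₂ * Pm) = mul (v₁ ⊙ v₂) * Pm by rw [← mul_assoc, mulmul]] at hMM
    have e2 : Pm * (mul g₁ * (Pp * (mul u₂ * Pm))) - Pm * (mul v₁ * (Pp * (mul v₂ * Pm)))
        = Pm * (mul v * Pm) - Pm * (mul (v₁ ⊙ v₂) * Pm) := by rw [← hMM]; abel
    rw [sand_sub] at e2
    exact K22 e2

/-! ### H^∞ multiplication invariance -/

theorem mul_mem_Hardy {φ : Linf} (hφ : MemHinf φ) {x : L2} (hx : x ∈ Hardy) :
    mul φ x ∈ Hardy := by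
  intro n hn
  have hsum := hasSum_fourier_series_L2 x
  have h2 := (ContinuousLinearMap.comp (innerSL ℂ (e n)) (mul φ)).hasSum hsum
  have h3 : ∀ m : ℤ, (ContinuousLinearMap.comp (innerSL ℂ (e n)) (mul φ))
      (fourierCoeff (x : Circ → ℂ) m • fourierLp 2 m) = 0 := by
    intro m
    simp only [ContinuousLinearMap.comp_apply, _root_.map_smul, innerSL_apply_apply, smul_eq_mul]
    rcases lt_or_ge m 0 with hm | hm
    · rw [hx m hm, zero_mul]
    · have hz : (inner ℂ (e n) (mul φ (e m)) : ℂ) = 0 := by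
        rw [← co_eq_inner, co_mul_e]
        exact hφ (n - m) (by omega)
      rw [show fourierLp (T := 2 * Real.pi) 2 m = e m from rfl, hz, mul_zero]
  simp only [h3] at h2
  have h4 : (inner ℂ (e n) (mul φ x) : ℂ) = 0 := h2.unique hasSum_zero
  rw [show fourierCoeff ((mul φ x : L2) : Circ → ℂ) n = co (mul φ x) n from rfl,
    co_eq_inner, h4]

theorem HL_of {φ : Linf} (h : MemHinf φ) : Pm * (mul φ * Pp) = 0 := by
  refine ContinuousLinearMap.ext fun x => ?_
  simp only [ContinuousLinearMap.mul_apply, ContinuousLinearMap.zero_apply]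
  have hmem : mul φ (Pp x) ∈ Hardy := mul_mem_Hardy h (Pp_mem x)
  rw [Pm_apply, Pp_of_mem hmem, sub_self]

theorem HR_of {φ : Linf} (h : MemHinf (conjInf φ)) : Pp * (mul φ * Pm) = 0 := by
  have h1 : Pm * (mul (conjInf φ) * Pp) = 0 := HL_of h
  have h2 := congrArg adjoint h1
  rw [adjoint_mul', adjoint_mul', adjoint_Pm, adjoint_Pp, adjoint_mul,
    conjInf_conjInf] at h2
  rw [← mul_assoc]
  simpa using h2

theorem rel_of_L {φ ψ : Linf} {lam : ℂ} (h : MemHinf (φ - lam • ψ)) :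
    Pm * (mul φ * Pp) = lam • (Pm * (mul ψ * Pp)) := by
  have h1 := HL_of h
  rw [mul_sub_symbol, mul_smul_symbol, sub_mul, smul_mul_assoc, mul_sub, mul_smul_comm] at h1
  exact sub_eq_zero.mp h1

theorem rel_of_R {φ ψ : Linf} {lam : ℂ} (h : MemHinf (conjInf φ - conj lam • conjInf ψ)) :
    Pp * (mul φ * Pm) = lam • (Pp * (mul ψ * Pm)) := by
  have h0 : MemHinf (conjInf (φ - lam • ψ)) := by rw [conjInf_sub_smul]; exact h
  have h1 := HR_of h0
  rw [mul_sub_symbol, mul_smul_symbol, sub_mul, smul_mul_assoc, mul_sub, mul_smul_comm] at h1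
  exact sub_eq_zero.mp h1

/-! ### construction of the product symbol -/

theorem Rop_mul (f₁ u₁ g₁ v₁ f₂ u₂ g₂ v₂ : Linf) :
    Rop f₁ u₁ g₁ v₁ ∘L Rop f₂ u₂ g₂ v₂ =
      Pp * (mul f₁ * (Pp * (mul f₂ * Pp))) + Pp * (mul u₁ * (Pm * (mul g₂ * Pp)))
      + (Pp * (mul f₁ * (Pp * (mul u₂ * Pm))) + Pp * (mul u₁ * (Pm * (mul v₂ * Pm))))
      + (Pm * (mul g₁ * (Pp * (mul f₂ * Pp))) + Pm * (mul v₁ * (Pm * (mul g₂ * Pp))))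
      + (Pm * (mul g₁ * (Pp * (mul u₂ * Pm))) + Pm * (mul v₁ * (Pm * (mul v₂ * Pm)))) := by
  show Rop f₁ u₁ g₁ v₁ * Rop f₂ u₂ g₂ v₂ = _
  simp only [Rop_eq, mul_add, add_mul, mul_assoc, lPpPp, lPpPm, lPmPp, lPmPm,
    PpPp, PpPm, PmPp, PmPm, zero_mul, mul_zero, add_zero, zero_add]
  abel

theorem assemble {f₁ u₁ g₁ v₁ f₂ u₂ g₂ v₂ f u g v : Linf}
    (hPP : Pp * (mul f₁ * (Pp * (mul f₂ * Pp))) + Pp * (mul u₁ * (Pm * (mul g₂ * Pp)))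
      = Pp * (mul f * Pp))
    (hPM : Pp * (mul f₁ * (Pp * (mul u₂ * Pm))) + Pp * (mul u₁ * (Pm * (mul v₂ * Pm)))
      = Pp * (mul u * Pm))
    (hMP : Pm * (mul g₁ * (Pp * (mul f₂ * Pp))) + Pm * (mul v₁ * (Pm * (mul g₂ * Pp)))
      = Pm * (mul g * Pp))
    (hMM : Pm * (mul g₁ * (Pp * (mul u₂ * Pm))) + Pm * (mul v₁ * (Pm * (mul v₂ * Pm)))
      = Pm * (mul v * Pm)) :
    Rop f₁ u₁ g₁ v₁ ∘L Rop f₂ u₂ g₂ v₂ = Rop f u g v := by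
  rw [Rop_mul, hPP, hPM, hMP, hMM, Rop_eq]
  abel

theorem sand_smul (A B : L2 →L[ℂ] L2) (c : ℂ) (α : Linf) :
    A * (mul (c • α) * B) = c • (A * (mul α * B)) := by
  rw [mul_smul_symbol, smul_mul_assoc, mul_smul_comm]

theorem mulchain (A B : L2 →L[ℂ] L2) (φ ψ : Linf) :
    A * (mul φ * (mul ψ * B)) = A * (mul (φ ⊙ ψ) * B) := by
  rw [← mul_assoc (mul φ), mulmul]

theorem split1 (φ ψ : Linf) (B : L2 →L[ℂ] L2) :
    Pp * (mul φ * (Pp * (mul ψ * B))) =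
      Pp * (mul (φ ⊙ ψ) * B) - Pp * (mul φ * (Pm * (mul ψ * B))) := by
  rw [Pp_eqX (mul ψ * B), mul_sub, mul_sub, mulchain]

theorem split2 (φ ψ : Linf) (B : L2 →L[ℂ] L2) :
    Pm * (mul φ * (Pm * (mul ψ * B))) =
      Pm * (mul (φ ⊙ ψ) * B) - Pm * (mul φ * (Pp * (mul ψ * B))) := by
  rw [Pm_eqX (mul ψ * B), mul_sub, mul_sub, mulchain]

theorem split3 (φ ψ : Linf) (B : L2 →L[ℂ] L2) :
    Pp * (mul φ * (Pm * (mul ψ * B))) =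
      Pp * (mul (φ ⊙ ψ) * B) - Pp * (mul φ * (Pp * (mul ψ * B))) := by
  rw [Pm_eqX (mul ψ * B), mul_sub, mul_sub, mulchain]

theorem split4 (φ ψ : Linf) (B : L2 →L[ℂ] L2) :
    Pm * (mul φ * (Pp * (mul ψ * B))) =
      Pm * (mul (φ ⊙ ψ) * B) - Pm * (mul φ * (Pm * (mul ψ * B))) := by
  rw [Pp_eqX (mul ψ * B), mul_sub, mul_sub, mulchain]

theorem cHLh {φ : Linf} (h : Pm * (mul φ * Pp) = 0) (X : L2 →L[ℂ] L2) :
    Pm * (mul φ * (Pp * X)) = 0 := by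
  have : Pm * (mul φ * (Pp * X)) = (Pm * (mul φ * Pp)) * X := by simp only [mul_assoc]
  rw [this, h, zero_mul]

theorem cHRh {φ : Linf} (h : Pp * (mul φ * Pm) = 0) (X : L2 →L[ℂ] L2) :
    Pp * (mul φ * (Pm * X)) = 0 := by
  have : Pp * (mul φ * (Pm * X)) = (Pp * (mul φ * Pm)) * X := by simp only [mul_assoc]
  rw [this, h, zero_mul]

theorem crelL {φ ψ : Linf} {lam : ℂ} (h : Pm * (mul φ * Pp) = lam • (Pm * (mul ψ * Pp)))
    (X : L2 →L[ℂ] L2) :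
    Pm * (mul φ * (Pp * X)) = lam • (Pm * (mul ψ * (Pp * X))) := by
  have e1 : Pm * (mul φ * (Pp * X)) = (Pm * (mul φ * Pp)) * X := by simp only [mul_assoc]
  have e2 : Pm * (mul ψ * (Pp * X)) = (Pm * (mul ψ * Pp)) * X := by simp only [mul_assoc]
  rw [e1, e2, h, smul_mul_assoc]

theorem crelR {φ ψ : Linf} {lam : ℂ} (h : Pp * (mul φ * Pm) = lam • (Pp * (mul ψ * Pm)))
    (X : L2 →L[ℂ] L2) :
    Pp * (mul φ * (Pm * X)) = lam • (Pp * (mul ψ * (Pm * X))) := by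
  have e1 : Pp * (mul φ * (Pm * X)) = (Pp * (mul φ * Pm)) * X := by simp only [mul_assoc]
  have e2 : Pp * (mul ψ * (Pm * X)) = (Pp * (mul ψ * Pm)) * X := by simp only [mul_assoc]
  rw [e1, e2, h, smul_mul_assoc]

theorem cfullL {φ : Linf} (h : Pm * (mul φ * Pp) = 0) :
    Pp * (mul φ * Pp) = mul φ * Pp := by
  rw [Pp_eqX (mul φ * Pp), h, sub_zero]

theorem cfullR {φ : Linf} (h : Pp * (mul φ * Pm) = 0) :
    Pm * (mul φ * Pm) = mul φ * Pm := by
  rw [Pm_eqX (mul φ * Pm), h, sub_zero]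

theorem construct_32 {f₁ u₁ g₁ v₁ f₂ u₂ g₂ v₂ : Linf} {lam : ℂ}
    (h1 : MemHinf (conjInf f₁ - conj lam • conjInf u₁)) (h2 : MemHinf (g₁ - lam • v₁))
    (h3 : MemHinf (g₂ - lam • f₂)) (h4 : MemHinf (conjInf v₂ - conj lam • conjInf u₂)) :
    ∃ f u g v : Linf, Rop f₁ u₁ g₁ v₁ ∘L Rop f₂ u₂ g₂ v₂ = Rop f u g v := by
  have rP1 : Pp * (mul f₁ * Pm) = lam • (Pp * (mul u₁ * Pm)) := rel_of_R h1
  have rQ1 : Pm * (mul g₁ * Pp) = lam • (Pm * (mul v₁ * Pp)) := rel_of_L h2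
  have rQ2 : Pm * (mul g₂ * Pp) = lam • (Pm * (mul f₂ * Pp)) := rel_of_L h3
  have rP2 : Pp * (mul v₂ * Pm) = lam • (Pp * (mul u₂ * Pm)) := rel_of_R h4
  refine ⟨f₁ ⊙ f₂, f₁ ⊙ u₂ + u₁ ⊙ v₂ - lam • (u₁ ⊙ u₂), lam • (v₁ ⊙ f₂), v₁ ⊙ v₂,
    assemble ?_ ?_ ?_ ?_⟩
  · rw [split1 f₁ f₂ Pp, crelR rP1 (mul f₂ * Pp), rQ2, mul_smul_comm, mul_smul_comm]
    abel
  · rw [split1 f₁ u₂ Pm, crelR rP1 (mul u₂ * Pm), split3 u₁ v₂ Pm, rP2,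
      mul_smul_comm, mul_smul_comm, ← sand_sub, ← sand_add, sand_smul,
      split3 u₁ u₂ Pm, smul_sub]
    abel
  · rw [crelL rQ1 (mul f₂ * Pp), rQ2, mul_smul_comm, mul_smul_comm, sand_smul,
      split4 v₁ f₂ Pp, smul_sub]
    abel
  · rw [crelL rQ1 (mul u₂ * Pm), split2 v₁ v₂ Pm, ← mul_smul_comm, ← mul_smul_comm, ← rP2]
    abel

theorem mul_zero_symbol : mul (0 : Linf) = 0 := by
  refine ContinuousLinearMap.ext fun x => ?_
  apply Lp.ext
  filter_upwards [coeFn_mul 0 x, Lp.coeFn_zero (E := ℂ) (p := ⊤) (μ := μC),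
    Lp.coeFn_zero (E := ℂ) (p := 2) (μ := μC)] with t h1 h2 h3
  simp only [ContinuousLinearMap.zero_apply, h3, Pi.zero_apply, h1, h2, zero_mul]

theorem construct_31 {f₁ u₁ g₁ v₁ f₂ u₂ g₂ v₂ : Linf}
    (hA : (MemHinf (conjInf f₁) ∧ MemHinf g₁) ∨ (MemHinf f₂ ∧ MemHinf (conjInf u₂)))
    (hB : (MemHinf (conjInf u₁) ∧ MemHinf v₁) ∨ (MemHinf g₂ ∧ MemHinf (conjInf v₂))) :
    ∃ f u g v : Linf, Rop f₁ u₁ g₁ v₁ ∘L Rop f₂ u₂ g₂ v₂ = Rop f u g v := by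
  rcases hA with ⟨hf₁, hg₁⟩ | ⟨hf₂, hu₂⟩
  · have Hf₁ : Pp * (mul f₁ * Pm) = 0 := HR_of hf₁
    have Hg₁ : Pm * (mul g₁ * Pp) = 0 := HL_of hg₁
    rcases hB with ⟨hu₁, hv₁⟩ | ⟨hg₂, hv₂⟩
    · -- case AA
      have Hu₁ : Pp * (mul u₁ * Pm) = 0 := HR_of hu₁
      have Hv₁ : Pm * (mul v₁ * Pp) = 0 := HL_of hv₁
      refine ⟨f₁ ⊙ f₂, f₁ ⊙ u₂, v₁ ⊙ g₂, v₁ ⊙ v₂, assemble ?_ ?_ ?_ ?_⟩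
      · rw [split1 f₁ f₂ Pp, cHRh Hf₁ (mul f₂ * Pp), cHRh Hu₁ (mul g₂ * Pp)]; abel
      · rw [split1 f₁ u₂ Pm, cHRh Hf₁ (mul u₂ * Pm), cHRh Hu₁ (mul v₂ * Pm)]; abel
      · rw [cHLh Hg₁ (mul f₂ * Pp), split2 v₁ g₂ Pp, cHLh Hv₁ (mul g₂ * Pp)]; abel
      · rw [cHLh Hg₁ (mul u₂ * Pm), split2 v₁ v₂ Pm, cHLh Hv₁ (mul v₂ * Pm)]; abel
    · -- case AB
      have Hg₂ : Pm * (mul g₂ * Pp) = 0 := HL_of hg₂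
      have Hv₂ : Pp * (mul v₂ * Pm) = 0 := HR_of hv₂
      refine ⟨f₁ ⊙ f₂, f₁ ⊙ u₂ + u₁ ⊙ v₂, 0, v₁ ⊙ v₂, assemble ?_ ?_ ?_ ?_⟩
      · rw [split1 f₁ f₂ Pp, cHRh Hf₁ (mul f₂ * Pp), Hg₂]
        simp only [mul_zero]; abel
      · rw [split1 f₁ u₂ Pm, cHRh Hf₁ (mul u₂ * Pm), split3 u₁ v₂ Pm, Hv₂,
          ← sand_add]
        simp only [mul_zero]; abel
      · rw [cHLh Hg₁ (mul f₂ * Pp), Hg₂, mul_zero_symbol]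
        simp only [mul_zero, zero_mul]; abel
      · rw [cHLh Hg₁ (mul u₂ * Pm), split2 v₁ v₂ Pm, Hv₂]
        simp only [mul_zero]; abel
  · have Hf₂ : Pm * (mul f₂ * Pp) = 0 := HL_of hf₂
    have Hu₂ : Pp * (mul u₂ * Pm) = 0 := HR_of hu₂
    rcases hB with ⟨hu₁, hv₁⟩ | ⟨hg₂, hv₂⟩
    · -- case BA
      have Hu₁ : Pp * (mul u₁ * Pm) = 0 := HR_of hu₁
      have Hv₁ : Pm * (mul v₁ * Pp) = 0 := HL_of hv₁
      refine ⟨f₁ ⊙ f₂, 0, g₁ ⊙ f₂ + v₁ ⊙ g₂, v₁ ⊙ v₂, assemble ?_ ?_ ?_ ?_⟩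
      · rw [cfullL Hf₂, mulchain, cHRh Hu₁ (mul g₂ * Pp)]; abel
      · rw [Hu₂, cHRh Hu₁ (mul v₂ * Pm), mul_zero_symbol]
        simp only [mul_zero, zero_mul]; abel
      · rw [cfullL Hf₂, mulchain, split2 v₁ g₂ Pp, cHLh Hv₁ (mul g₂ * Pp), ← sand_add]
        abel
      · rw [Hu₂, split2 v₁ v₂ Pm, cHLh Hv₁ (mul v₂ * Pm)]
        simp only [mul_zero]; abel
    · -- case BB
      have Hg₂ : Pm * (mul g₂ * Pp) = 0 := HL_of hg₂
      have Hv₂ : Pp * (mul v₂ * Pm) = 0 := HR_of hv₂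
      refine ⟨f₁ ⊙ f₂, u₁ ⊙ v₂, g₁ ⊙ f₂, v₁ ⊙ v₂, assemble ?_ ?_ ?_ ?_⟩
      · rw [cfullL Hf₂, mulchain, Hg₂]
        simp only [mul_zero]; abel
      · rw [Hu₂, split3 u₁ v₂ Pm, Hv₂]
        simp only [mul_zero]; abel
      · rw [cfullL Hf₂, mulchain, Hg₂]
        simp only [mul_zero]; abel
      · rw [Hu₂, split2 v₁ v₂ Pm, Hv₂]
        simp only [mul_zero]; abel

/-! ### V and mI vector lemmas -/

theorem co_Vmap (x : L2) (n : ℤ) : co (Vmap x) n = conj (co x (-(n+1))) := by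
  rw [Vmap, co_mul_zbar, co_conjL2]

theorem co_mI (φ : Linf) (k : ℤ) : co (mI φ) k = if k < 0 then coI φ k else 0 := by
  rw [mI, co_Pm, co_toL2]

theorem vecV (φ : Linf) : Vmap (mI φ) = lvec (conjInf φ) := by
  refine ext_co fun n => ?_
  rw [co_Vmap, co_mI, lvec, co_Pp, co_mul_e, coI_conjInf]
  split_ifs with h1 h2 <;> first | omega | simp | (congr 2; omega)

theorem Vmap_zero : Vmap (0 : L2) = 0 := by
  refine ext_co fun n => ?_
  rw [co_Vmap, co_zero, co_zero, map_zero]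

theorem Vmap_inj {x y : L2} (h : Vmap x = Vmap y) : x = y := by
  refine ext_co fun n => ?_
  have h2 := congrArg (fun z => co z (-(n+1))) h
  simp only [co_Vmap] at h2
  have : (-(-(n+1)+1) : ℤ) = n := by ring
  rw [this] at h2
  exact star_injective (by exact_mod_cast h2)

theorem Vmap_smul (c : ℂ) (x : L2) : Vmap (c • x) = conj c • Vmap x := by
  refine ext_co fun n => ?_
  rw [co_Vmap, co_smul, co_smul, co_Vmap, map_mul]

theorem mI_eq_zero_iff {φ : Linf} : mI φ = 0 ↔ MemHinf φ := by
  constructor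
  · intro h n hn
    have h2 := congrArg (fun z => co z n) h
    simp only [co_mI, co_zero, if_pos hn] at h2
    exact h2
  · intro h
    refine ext_co fun n => ?_
    rw [co_mI, co_zero]
    split_ifs with hn
    · exact h n hn
    · rfl

theorem mI_sub_smul (c : ℂ) (φ ψ : Linf) : mI (φ - c • ψ) = mI φ - c • mI ψ := by
  rw [mI, mI, mI, toL2_sub, toL2_smul, map_sub, _root_.map_smul]

theorem MemHinf_sub_smul_iff {φ ψ : Linf} {c : ℂ} :
    MemHinf (φ - c • ψ) ↔ mI φ = c • mI ψ := by
  rw [← mI_eq_zero_iff, mI_sub_smul, sub_eq_zero]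

/-! ### rank one dichotomy -/

section RankOneGeneric

variable {E : Type*} [NormedAddCommGroup E] [InnerProductSpace ℂ E]

theorem grankOne_zero_left (q : E) : rankOne (0 : E) q = 0 := by
  refine ContinuousLinearMap.ext fun x => ?_
  simp [rankOne_apply]

theorem grankOne_zero_right (p : E) : rankOne p (0 : E) = 0 := by
  refine ContinuousLinearMap.ext fun x => ?_
  simp [rankOne_apply]

theorem rankOne_eq_zero_iff {p q : E} : rankOne p q = 0 ↔ p = 0 ∨ q = 0 := by
  constructor
  · intro h
    by_cases hq : q = 0
    · exact Or.inr hq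
    · left
      have h2 := congrArg (fun A : E →L[ℂ] E => A q) h
      simp only [rankOne_apply, ContinuousLinearMap.zero_apply] at h2
      rcases smul_eq_zero.mp h2 with h3 | h3
      · exact absurd (inner_self_eq_zero.mp h3) hq
      · exact h3
  · rintro (rfl | rfl)
    · exact grankOne_zero_left q
    · exact grankOne_zero_right p

theorem rankOne_dichotomy {p q p' q' : E} (h : rankOne p q = rankOne p' q') :
    ((p = 0 ∨ q = 0) ∧ (p' = 0 ∨ q' = 0)) ∨
      ∃ lam : ℂ, lam ≠ 0 ∧ p = lam • p' ∧ q' = conj lam • q := by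
  by_cases hdeg : p = 0 ∨ q = 0
  · left
    refine ⟨hdeg, ?_⟩
    have h0 : rankOne p' q' = 0 := by rw [← h]; exact rankOne_eq_zero_iff.mpr hdeg
    exact rankOne_eq_zero_iff.mp h0
  · right
    push_neg at hdeg
    obtain ⟨hp, hq⟩ := hdeg
    have happ : ∀ x : E, (inner ℂ q x : ℂ) • p = (inner ℂ q' x : ℂ) • p' := by
      intro x
      have := congrArg (fun A : E →L[ℂ] E => A x) h
      simpa only [rankOne_apply] using this
    have hqq : (inner ℂ q q : ℂ) ≠ 0 := fun hc => hq (inner_self_eq_zero.mp hc)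
    set lam : ℂ := inner ℂ q' q / inner ℂ q q with hlam
    have hplam : p = lam • p' := by
      have h1 := happ q
      have h2 : p = ((inner ℂ q q : ℂ))⁻¹ • ((inner ℂ q q : ℂ) • p) := by
        rw [smul_smul, inv_mul_cancel₀ hqq, one_smul]
      rw [h2, h1, smul_smul, hlam, div_eq_mul_inv, mul_comm]
    have hlamne : lam ≠ 0 := by
      intro hc
      rw [hc, zero_smul] at hplam
      exact hp hplam
    have hpne' : p' ≠ 0 := by
      intro hc
      rw [hc, smul_zero] at hplam
      exact hp hplam
    have hq' : q' = conj lam • q := by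
      have hsc : ∀ x : E, (inner ℂ q' x : ℂ) = lam * inner ℂ q x := by
        intro x
        have h1 := happ x
        rw [hplam, smul_smul] at h1
        have h2 : ((inner ℂ q x : ℂ) * lam - inner ℂ q' x) • p' = 0 := by
          rw [sub_smul, h1, sub_self]
        rcases smul_eq_zero.mp h2 with h3 | h3
        · have := sub_eq_zero.mp h3
          rw [← this]; ring
        · exact absurd h3 hpne'
      have hperp : ∀ x : E, (inner ℂ (q' - conj lam • q) x : ℂ) = 0 := by
        intro x
        rw [inner_sub_left, inner_smul_left, hsc x, starRingEnd_self_apply, sub_eq_zero]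
      have := hperp (q' - conj lam • q)
      rw [inner_self_eq_zero] at this
      exact sub_eq_zero.mp this
    exact ⟨lam, hlamne, hplam, hq'⟩

end RankOneGeneric

/-! ### pairs -/

theorem pair_fst (a b : L2) : (pair a b).fst = a := rfl
theorem pair_snd (a b : L2) : (pair a b).snd = b := rfl

theorem smul_pair (c : ℂ) (a b : L2) : c • pair a b = pair (c • a) (c • b) := rfl

theorem pair_zero : pair 0 0 = (0 : L2sq) := rfl

theorem pair_eq_iff {a b c d : L2} : pair a b = pair c d ↔ a = c ∧ b = d := by
  constructor
  · intro h
    exact ⟨congrArg (fun z : L2sq => z.fst) h, congrArg (fun z : L2sq => z.snd) h⟩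
  · rintro ⟨rfl, rfl⟩; rfl

theorem inner_pair (a b : L2) (v : L2sq) :
    (inner ℂ (pair a b) v : ℂ) = inner ℂ a v.fst + inner ℂ b v.snd := by
  rw [WithLp.prod_inner_apply]
  rfl

theorem rankOne_pair_iff {p1 p2 q1 q2 p1' p2' q1' q2' : L2} :
    rankOne (pair p1 p2) (pair q1 q2) = rankOne (pair p1' p2') (pair q1' q2') ↔
      (rankOne p1 q1 = rankOne p1' q1' ∧ rankOne p1 q2 = rankOne p1' q2' ∧
       rankOne p2 q1 = rankOne p2' q1' ∧ rankOne p2 q2 = rankOne p2' q2') := by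
  constructor
  · intro h
    have happ : ∀ v : L2sq,
        (inner ℂ (pair q1 q2) v : ℂ) • pair p1 p2 = (inner ℂ (pair q1' q2') v : ℂ) • pair p1' p2' := by
      intro v
      have := congrArg (fun A : L2sq →L[ℂ] L2sq => A v) h
      simpa only [rankOne_apply] using this
    refine ⟨?_, ?_, ?_, ?_⟩
    · refine ContinuousLinearMap.ext fun x => ?_
      have h2 := congrArg (fun z : L2sq => z.fst) (happ (pair x 0))
      simpa [rankOne_apply, inner_pair, pair_fst, pair_snd, smul_pair] using h2
    · refine ContinuousLinearMap.ext fun x => ?_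
      have h2 := congrArg (fun z : L2sq => z.fst) (happ (pair 0 x))
      simpa [rankOne_apply, inner_pair, pair_fst, pair_snd, smul_pair] using h2
    · refine ContinuousLinearMap.ext fun x => ?_
      have h2 := congrArg (fun z : L2sq => z.snd) (happ (pair x 0))
      simpa [rankOne_apply, inner_pair, pair_fst, pair_snd, smul_pair] using h2
    · refine ContinuousLinearMap.ext fun x => ?_
      have h2 := congrArg (fun z : L2sq => z.snd) (happ (pair 0 x))
      simpa [rankOne_apply, inner_pair, pair_fst, pair_snd, smul_pair] using h2
  · rintro ⟨h11, h12, h21, h22⟩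
    refine ContinuousLinearMap.ext fun v => ?_
    have e11 := congrArg (fun A : L2 →L[ℂ] L2 => A v.fst) h11
    have e12 := congrArg (fun A : L2 →L[ℂ] L2 => A v.snd) h12
    have e21 := congrArg (fun A : L2 →L[ℂ] L2 => A v.fst) h21
    have e22 := congrArg (fun A : L2 →L[ℂ] L2 => A v.snd) h22
    simp only [rankOne_apply] at e11 e12 e21 e22 ⊢
    rw [inner_pair, inner_pair, smul_pair, smul_pair, add_smul, add_smul, add_smul, add_smul,
      e11, e12, e21, e22]

theorem pair_eq_zero_iff {a b : L2} : pair a b = 0 ↔ a = 0 ∧ b = 0 := by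
  rw [← pair_zero, pair_eq_iff]

theorem Vmap_eq_zero_iff {x : L2} : Vmap x = 0 ↔ x = 0 := by
  constructor
  · intro h
    exact Vmap_inj (by rw [h, Vmap_zero])
  · rintro rfl; exact Vmap_zero


/-- (Semi-commutativity of GSIOs.) For symbols `H₁ = [[f₁,u₁],[g₁,v₁]]`,
`H₂ = [[f₂,u₂],[g₂,v₂]]` in `L^∞_{2×2}`, the following are equivalent:
(1) `R_{H₁}R_{H₂}` is a GSIO; (2) a rank-one operator identity on `L² ⊕ L²`;
(3) the symbol conditions (3.1) or (3.2). -/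
theorem statement4 (f₁ u₁ g₁ v₁ f₂ u₂ g₂ v₂ : Linf) :
    List.TFAE
      [∃ f u g v : Linf, Rop f₁ u₁ g₁ v₁ ∘L Rop f₂ u₂ g₂ v₂ = Rop f u g v,
       rankOne (pair (Vmap (mI (conjInf f₁))) (mI g₁)) (pair (Vmap (mI f₂)) (mI (conjInf u₂))) =
         rankOne (pair (Vmap (mI (conjInf u₁))) (mI v₁)) (pair (Vmap (mI g₂)) (mI (conjInf v₂))),
       ((((MemHinf (conjInf f₁) ∧ MemHinf g₁) ∨ (MemHinf f₂ ∧ MemHinf (conjInf u₂))) ∧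
           ((MemHinf (conjInf u₁) ∧ MemHinf v₁) ∨ (MemHinf g₂ ∧ MemHinf (conjInf v₂)))) ∨
         (∃ lam : ℂ, lam ≠ 0 ∧
           MemHinf (conjInf f₁ - conj lam • conjInf u₁) ∧ MemHinf (g₁ - lam • v₁) ∧
           MemHinf (g₂ - lam • f₂) ∧ MemHinf (conjInf v₂ - conj lam • conjInf u₂)))] := by
  tfae_have 1 → 2 := by
    rintro ⟨f, u, g, v, h⟩
    obtain ⟨r11, r12, r21, r22⟩ := rank_ids h
    rw [rankOne_pair_iff]
    refine ⟨?_, ?_, ?_, ?_⟩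
    · simpa only [vecV, conjInf_conjInf] using r11
    · simpa only [vecV, conjInf_conjInf] using r12
    · simpa only [vecV, conjInf_conjInf] using r21
    · simpa only [vecV, conjInf_conjInf] using r22
  tfae_have 2 → 3 := by
    intro h2
    rcases rankOne_dichotomy h2 with ⟨hd1, hd2⟩ | ⟨lam, hne, hP, hQ⟩
    · left
      constructor
      · rcases hd1 with hP0 | hQ0
        · obtain ⟨hV, hg⟩ := pair_eq_zero_iff.mp hP0
          exact Or.inl ⟨mI_eq_zero_iff.mp (Vmap_eq_zero_iff.mp hV), mI_eq_zero_iff.mp hg⟩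
        · obtain ⟨hV, hg⟩ := pair_eq_zero_iff.mp hQ0
          exact Or.inr ⟨mI_eq_zero_iff.mp (Vmap_eq_zero_iff.mp hV), mI_eq_zero_iff.mp hg⟩
      · rcases hd2 with hP0 | hQ0
        · obtain ⟨hV, hg⟩ := pair_eq_zero_iff.mp hP0
          exact Or.inl ⟨mI_eq_zero_iff.mp (Vmap_eq_zero_iff.mp hV), mI_eq_zero_iff.mp hg⟩
        · obtain ⟨hV, hg⟩ := pair_eq_zero_iff.mp hQ0
          exact Or.inr ⟨mI_eq_zero_iff.mp (Vmap_eq_zero_iff.mp hV), mI_eq_zero_iff.mp hg⟩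
    · right
      rw [smul_pair, pair_eq_iff] at hP hQ
      obtain ⟨hP1, hP2⟩ := hP
      obtain ⟨hQ1, hQ2⟩ := hQ
      refine ⟨lam, hne, ?_, ?_, ?_, ?_⟩
      · rw [show lam • Vmap (mI (conjInf u₁)) = Vmap (conj lam • mI (conjInf u₁)) by
          rw [Vmap_smul]; simp] at hP1
        exact MemHinf_sub_smul_iff.mpr (Vmap_inj hP1)
      · exact MemHinf_sub_smul_iff.mpr hP2
      · rw [show conj lam • Vmap (mI f₂) = Vmap (lam • mI f₂) by rw [Vmap_smul]] at hQ1
        exact MemHinf_sub_smul_iff.mpr (Vmap_inj hQ1)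
      · exact MemHinf_sub_smul_iff.mpr hQ2
  tfae_have 3 → 1 := by
    rintro (⟨hA, hB⟩ | ⟨lam, hne, h1', h2', h3', h4'⟩)
    · exact construct_31 hA hB
    · exact construct_32 h1' h2' h3' h4'
  tfae_finish


end GSIO
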